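/- Let q > 1 be real and let λ, α_1 ∈ ℂ and α_2 ∈ ℝ with α_2 ≥ 0, |α_1| < 1, and |α_2| ≤ 1. If λα_2 = 1, λ(1 + α_1α_2) = q(α_1 + α_2), and λα_1 = (q(q−1)/2)(α_1 + α_2)² + qα_1α_2, then α_1 is real and negative, α_1² = 1/((1 + √(2/q))(1 + √(2q))), and α_2² = (1 + √(2/q))/(1 + √(2q)). -/

import Mathlib

set_option maxHeartbeats 1000000


theorem l1_system_solution (q : ℝ) (hq : 1 < q) (lam α₁ : ℂ) (α₂ : ℝ)
    (hα₂0 : 0 ≤ α₂) (hα₁ : ‖α₁‖ < 1) (hα₂1 : α₂ ≤ 1)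
    (h1 : lam * (α₂ : ℂ) = 1)
    (h2 : lam * (1 + α₁ * (α₂ : ℂ)) = (q : ℂ) * (α₁ + (α₂ : ℂ)))
    (h3 : lam * α₁ = (((q * (q - 1) / 2 : ℝ)) : ℂ) * (α₁ + (α₂ : ℂ)) ^ 2 +
      (q : ℂ) * α₁ * (α₂ : ℂ)) :
    α₁.im = 0 ∧ α₁.re < 0 ∧
    α₁.re ^ 2 = 1 / ((1 + Real.sqrt (2 / q)) * (1 + Real.sqrt (2 * q))) ∧
    α₂ ^ 2 = (1 + Real.sqrt (2 / q)) / (1 + Real.sqrt (2 * q)) := by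
  have hq0 : (0:ℝ) < q := by linarith
  have hα₂ne : α₂ ≠ 0 := by
    rintro rfl
    simp at h1
  have htpos : 0 < α₂ := hα₂0.lt_of_ne' hα₂ne
  -- eliminate lam
  have h2c : 1 + α₁ * (α₂:ℂ) = (q:ℂ) * (α₁ + (α₂:ℂ)) * (α₂:ℂ) := by
    linear_combination (α₂:ℂ) * h2 - (1 + α₁ * (α₂:ℂ)) * h1
  have h3c : α₁ = (((q * (q - 1) / 2 : ℝ)) : ℂ) * (α₁ + (α₂:ℂ)) ^ 2 * (α₂:ℂ)
      + (q:ℂ) * α₁ * (α₂:ℂ)^2 := by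
    linear_combination (α₂:ℂ) * h3 - α₁ * h1
  -- α₁ is real
  have hcne : (((1-q)*α₂ : ℝ) : ℂ) ≠ 0 := by
    have h : (1-q)*α₂ ≠ 0 := mul_ne_zero (by intro h; nlinarith) hα₂ne
    exact_mod_cast h
  have h5 : α₁ * (((1-q)*α₂ : ℝ):ℂ) = ((q*α₂^2 - 1 : ℝ):ℂ) := by
    push_cast
    linear_combination h2c
  obtain ⟨x, hx⟩ : ∃ x : ℝ, α₁ = (x : ℂ) :=
    ⟨(q*α₂^2 - 1)/((1-q)*α₂), by rw [Complex.ofReal_div, eq_div_iff hcne]; exact h5⟩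
  have him : α₁.im = 0 := by rw [hx]; exact Complex.ofReal_im _
  have hre : α₁.re = x := by rw [hx]; exact Complex.ofReal_re _
  -- real versions of the equations
  have e2 : 1 + x*α₂ = q*(x+α₂)*α₂ := by
    rw [hx] at h2c
    exact_mod_cast h2c
  have e3 : x = (q*(q-1)/2)*(x+α₂)^2*α₂ + q*x*α₂^2 := by
    rw [hx] at h3c
    exact_mod_cast h3c
  have hx1 : x < 1 := by
    rw [hx, Complex.norm_real, Real.norm_eq_abs] at hα₁
    exact lt_of_le_of_lt (le_abs_self x) hα₁
  clear h1 h2 h3 h2c h3c h5 hcne hx hα₁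
  have e2' : q*α₂^2 = 1 + x*α₂ - q*x*α₂ := by linear_combination -e2
  have hsq : q^2*α₂^2*(x+α₂)^2 = (1+x*α₂)^2 := by
    linear_combination (-(1 + x*α₂ + q*(x+α₂)*α₂)) * e2
  have key : (q-1)*((1+x*α₂)^2 - 2*q*(x*α₂)^2) = 0 := by
    linear_combination (-(2*q*α₂)) * e3 - (q-1) * hsq - (2*q*x*α₂) * e2'
  have h4 : (1+x*α₂)^2 = 2*q*(x*α₂)^2 := by
    have hq1 : q - 1 ≠ 0 := by intro h; nlinarith
    rcases mul_eq_zero.mp key with h | h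
    · exact absurd h hq1
    · linarith
  obtain ⟨r, hrdef⟩ : ∃ r : ℝ, r = Real.sqrt (2*q) := ⟨_, rfl⟩
  have hr2 : r^2 = 2*q := by rw [hrdef]; exact Real.sq_sqrt (by positivity)
  have hr0 : 0 ≤ r := hrdef ▸ Real.sqrt_nonneg _
  have hr1 : 1 < r := by nlinarith
  have hs : Real.sqrt (2/q) = r/q := by
    rw [show (2/q) = (r/q)^2 by rw [div_pow, hr2]; field_simp]
    exact Real.sqrt_sq (by positivity)
  have hfact : (1 + x*α₂ - r*(x*α₂)) * (1 + x*α₂ + r*(x*α₂)) = 0 := by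
    linear_combination h4 - (x*α₂)^2 * hr2
  rcases mul_eq_zero.mp hfact with hA | hB
  · -- impossible case
    exfalso
    have hA' : 1 + x*α₂ - r*(x*α₂) = 0 := hA
    have hp1 : (x*α₂)*(r-1) = 1 := by linear_combination -hA'
    have hppos : 0 < x*α₂ := by nlinarith
    have hplt1 : x*α₂ < 1 := by nlinarith [mul_pos (sub_pos.mpr hx1) htpos]
    have hrgt2 : 2 < r := by
      have h := mul_lt_mul_of_pos_right hplt1 (show (0:ℝ) < r - 1 by linarith)
      rw [hp1, one_mul] at h
      linarith
    have hqgt2 : 2 < q := by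
      have h7 : (2:ℝ)*2 < r*r := mul_lt_mul' hrgt2.le hrgt2 (by norm_num) (by linarith)
      have h8 : r*r = 2*q := by rw [← hr2]; ring
      linarith
    have ht2 : q*α₂^2 = (x*α₂)*(r-q) := by linear_combination e2' + hA'
    have h6 : 0 < (x*α₂)*(r-q) := by rw [← ht2]; positivity
    have hrq : q < r := by nlinarith [h6, hppos]
    nlinarith [hr2, mul_pos (sub_pos.mpr hrq) (by linarith : (0:ℝ) < r + q),
      mul_pos (by linarith : (0:ℝ) < q - 2) hq0]
  · -- real case
    have hp1 : (x*α₂)*(1+r) = -1 := by linear_combination hB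
    have hpneg : x*α₂ < 0 := by nlinarith
    have hxneg : x < 0 := by
      rcases mul_neg_iff.mp hpneg with h | h
      · exact absurd h.2 (not_lt.mpr hα₂0)
      · exact h.1
    have h1r : (0:ℝ) < 1 + r := by linarith
    have hqr : (0:ℝ) < q + r := by linarith
    have h2t : q*(1+r)*α₂^2 = q + r := by
      linear_combination (1+r)*e2' + (1-q)*hp1
    refine ⟨him, by rw [hre]; exact hxneg, ?_, ?_⟩
    · rw [hre, hs, ← hrdef]
      have hx2 : x^2*α₂^2*(1+r)^2 = 1 := by
        linear_combination ((x*α₂)*(1+r) - 1)*hp1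
      have hgoal : x^2 * ((q+r)*(1+r)) = q := by
        linear_combination q*hx2 - x^2*(1+r)*h2t
      have hD : x^2 * ((1+r/q)*(1+r)) = 1 := by
        field_simp
        linear_combination hgoal
      exact eq_one_div_of_mul_eq_one_left (by linear_combination hD)
    · rw [hs, ← hrdef, eq_div_iff (ne_of_gt h1r)]
      field_simp
      linear_combination h2t
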